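/- arXiv:0910.3931 — 2 statements merged into one kernel-verified Lean document; each statement's English description precedes it below -/
import Mathlib

section
/- With notation as in the paper, for r = 1 the coefficient c_{0,1,d} equals 2^{d-3}; that is, sum over n from 1 to d and m from 0 to floor(n/2) of ((-1)^{n-1} 2^{d-n-2} / n) * binom(d,n) * binom(n,m) * (n-2m)^2 equals 2^{d-3}. -/
open Finset

/-- The coefficient `c_{t,1,d}` from the class formula for special subvarieties
associated to a `g^1_d`:
`c_{t,1,d} = ∑_{n=1}^{d} ∑_{m=0}^{⌊n/2⌋} ((-1)^{n-1}/n)·2^{d-n-t-2}·C(d,n)·C(n,m)·(n-2m)^{t+2}`. -/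
lemma fullT (n : ℕ) : ∑ m ∈ range (n+1), (n.choose m : ℚ) * ((n : ℚ) - 2*m)^2 = (n : ℚ) * 2^n := by
  induction n with
  | zero => simp
  | succ n ih =>
    have hchoose : ∑ m ∈ range (n+1), (n.choose m : ℚ) = 2^n := by
      exact_mod_cast congrArg (Nat.cast : ℕ → ℚ) (Nat.sum_range_choose n)
    have h1 : ∑ m ∈ range (n+2), ((n+1).choose m : ℚ) * (((n:ℚ)+1) - 2*m)^2
        = ∑ m ∈ range (n+1), (((n.choose m : ℚ)) + (n.choose (m+1) : ℚ)) * (((n:ℚ)+1) - 2*(m+1))^2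
          + (((n:ℚ)+1))^2 := by
      rw [Finset.sum_range_succ']
      simp only [Nat.choose_succ_succ, Nat.succ_eq_add_one, Nat.choose_zero_right, Nat.cast_one]
      push_cast
      norm_num
    have h2 : ∑ m ∈ range (n+1), (n.choose (m+1) : ℚ) * (((n:ℚ)+1) - 2*(m+1))^2
        = ∑ m ∈ range (n+1), (n.choose m : ℚ) * (((n:ℚ)+1) - 2*m)^2 - ((n:ℚ)+1)^2 := by
      have := Finset.sum_range_succ' (fun m => (n.choose m : ℚ) * (((n:ℚ)+1) - 2*m)^2) (n+1)
      have htop := Finset.sum_range_succ (fun m => (n.choose m : ℚ) * (((n:ℚ)+1) - 2*m)^2) (n+1)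
      simp only [Nat.choose_succ_self, Nat.cast_zero, Nat.choose_zero_right, Nat.cast_one] at this htop
      push_cast at this htop ⊢
      linarith [this, htop]
    have key : ∑ m ∈ range (n+2), ((n+1).choose m : ℚ) * (((n:ℚ)+1) - 2*m)^2
        = ∑ m ∈ range (n+1), (n.choose m : ℚ) * ((((n:ℚ)+1) - 2*(m+1))^2 + (((n:ℚ)+1) - 2*m)^2) := by
      rw [h1]
      rw [Finset.sum_congr rfl (fun m _ => by ring :
        ∀ m ∈ range (n+1), (((n.choose m : ℚ)) + (n.choose (m+1) : ℚ)) * (((n:ℚ)+1) - 2*(m+1))^2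
          = (n.choose m : ℚ) * (((n:ℚ)+1) - 2*(m+1))^2 + (n.choose (m+1) : ℚ) * (((n:ℚ)+1) - 2*(m+1))^2)]
      rw [Finset.sum_add_distrib, h2]
      rw [Finset.sum_congr rfl (fun m _ => by ring :
        ∀ m ∈ range (n+1), (n.choose m : ℚ) * ((((n:ℚ)+1) - 2*(m+1))^2 + (((n:ℚ)+1) - 2*m)^2)
          = (n.choose m : ℚ) * (((n:ℚ)+1) - 2*(m+1))^2 + (n.choose m : ℚ) * (((n:ℚ)+1) - 2*m)^2)]
      rw [Finset.sum_add_distrib]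
      ring
    have hsimp : ∀ m ∈ range (n+1), (n.choose m : ℚ) * ((((n:ℚ)+1) - 2*(m+1))^2 + (((n:ℚ)+1) - 2*m)^2)
        = 2 * ((n.choose m : ℚ) * ((n:ℚ) - 2*m)^2) + 2 * (n.choose m : ℚ) := fun m _ => by ring
    rw [show ((n:ℕ)+1+1) = n+2 from rfl]
    push_cast
    rw [key, Finset.sum_congr rfl hsimp, Finset.sum_add_distrib, ← Finset.mul_sum, ← Finset.mul_sum,
      ih, hchoose]
    ring

lemma halfT (n : ℕ) : ∑ m ∈ range (n/2+1), (n.choose m : ℚ) * ((n : ℚ) - 2*m)^2 = (n : ℚ) * 2^n / 2 := by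
  set f : ℕ → ℚ := fun m => (n.choose m : ℚ) * ((n : ℚ) - 2*m)^2 with hf
  have hrefl : ∑ m ∈ Ico (n/2+1) (n+1), f m = ∑ m ∈ range ((n+1)/2), f m := by
    apply Finset.sum_nbij' (fun m => n - m) (fun m => n - m)
    · intro a ha; simp only [mem_Ico, mem_range] at *; omega
    · intro a ha; simp only [mem_Ico, mem_range] at *; omega
    · intro a ha; simp only [mem_Ico] at ha; omega
    · intro a ha; simp only [mem_range] at ha; omega
    · intro a ha
      simp only [mem_Ico] at ha
      have hle : a ≤ n := by omega
      rw [hf]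
      simp only
      rw [Nat.choose_symm hle, Nat.cast_sub hle]
      ring
  have hsplit : ∑ m ∈ range (n+1), f m = ∑ m ∈ range (n/2+1), f m + ∑ m ∈ Ico (n/2+1) (n+1), f m := by
    rw [range_eq_Ico, ← Finset.sum_Ico_consecutive _ (by omega : 0 ≤ n/2+1) (by omega : n/2+1 ≤ n+1), range_eq_Ico]
  have hhalf : ∑ m ∈ range ((n+1)/2), f m = ∑ m ∈ range (n/2+1), f m := by
    rcases Nat.even_or_odd n with ⟨k, hk⟩ | ⟨k, hk⟩
    · have h1 : (n+1)/2 = n/2 := by omega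
      have h2 : n/2 = k := by omega
      rw [h1, Finset.sum_range_succ, h2]
      have : f k = 0 := by rw [hf]; simp only; subst hk; push_cast; ring_nf
      rw [this, add_zero]
    · have : (n+1)/2 = n/2+1 := by omega
      rw [this]
  have := fullT n
  rw [hsplit, hrefl, hhalf] at this
  linarith

lemma altsum (d : ℕ) (hd : 1 ≤ d) : ∑ n ∈ Icc 1 d, (-1:ℚ)^(n-1) * (d.choose n : ℚ) = 1 := by
  have hint := Int.alternating_sum_range_choose (n := d)
  rw [if_neg (by omega)] at hint
  have hq : ∑ i ∈ range (d+1), (-1:ℚ)^i * (d.choose i : ℚ) = 0 := by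
    exact_mod_cast congrArg (Int.cast : ℤ → ℚ) hint
  have h01 : ∑ i ∈ Ico 0 1, (-1:ℚ)^i * (d.choose i : ℚ) = 1 := by simp
  have hsplit : ∑ i ∈ range (d+1), (-1:ℚ)^i * (d.choose i : ℚ)
      = 1 + ∑ n ∈ Icc 1 d, (-1:ℚ)^n * (d.choose n : ℚ) := by
    rw [range_eq_Ico, ← Finset.sum_Ico_consecutive _ (by omega : 0 ≤ 1) (by omega : 1 ≤ d+1),
      h01, Finset.Ico_add_one_right_eq_Icc]
  have hneg : ∀ n ∈ Icc 1 d, (-1:ℚ)^n * (d.choose n : ℚ) = -((-1:ℚ)^(n-1) * (d.choose n : ℚ)) := by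
    intro n hn
    simp only [mem_Icc] at hn
    have h1 : (-1:ℚ)^n = (-1)^(n-1) * (-1) := by
      rw [← pow_succ]; congr 1; omega
    rw [h1]; ring
  rw [hsplit, Finset.sum_congr rfl hneg, Finset.sum_neg_distrib] at hq
  linarith

/-- The coefficient `c_{t,1,d}` from the class formula for special subvarieties
associated to a `g^1_d`:
`c_{t,1,d} = ∑_{n=1}^{d} ∑_{m=0}^{⌊n/2⌋} ((-1)^{n-1}/n)·2^{d-n-t-2}·C(d,n)·C(n,m)·(n-2m)^{t+2}`. -/
noncomputable def cCoeff (t d : ℕ) : ℚ :=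
  ∑ n ∈ Icc 1 d, ∑ m ∈ range (n / 2 + 1),
    ((-1 : ℚ) ^ (n - 1) / n) * (2 : ℚ) ^ ((d : ℤ) - n - t - 2) *
      (d.choose n) * (n.choose m) * ((n : ℚ) - 2 * m) ^ (t + 2)

/-- For `r = 1` and `t = 0`, the coefficient `c_{0,1,d}` equals `2^{d-3}`. -/
theorem statement_8 (d : ℕ) (hd : 2 ≤ d) :
    cCoeff 0 d = (2 : ℚ) ^ ((d : ℤ) - 3) := by
  unfold cCoeff
  have hterm : ∀ n ∈ Icc 1 d,
      (∑ m ∈ range (n / 2 + 1),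
        ((-1 : ℚ) ^ (n - 1) / n) * (2 : ℚ) ^ ((d : ℤ) - n - (0:ℕ) - 2) *
          (d.choose n) * (n.choose m) * ((n : ℚ) - 2 * m) ^ (0 + 2))
      = ((-1:ℚ)^(n-1) * (d.choose n : ℚ)) * 2^((d:ℤ)-3) := by
    intro n hn
    simp only [mem_Icc] at hn
    have hn0 : (n : ℚ) ≠ 0 := Nat.cast_ne_zero.mpr (by omega)
    have hc : ∀ m ∈ range (n/2+1),
        ((-1 : ℚ) ^ (n - 1) / n) * (2 : ℚ) ^ ((d : ℤ) - n - (0:ℕ) - 2) *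
          (d.choose n) * (n.choose m) * ((n : ℚ) - 2 * m) ^ (0 + 2)
        = (((-1 : ℚ) ^ (n - 1) / n) * (2 : ℚ) ^ ((d : ℤ) - n - (0:ℕ) - 2) * (d.choose n))
          * ((n.choose m : ℚ) * ((n : ℚ) - 2 * m) ^ 2) := fun m _ => by ring
    rw [Finset.sum_congr rfl hc, ← Finset.mul_sum, halfT]
    have h2 : (2:ℚ) ^ ((d : ℤ) - n - (0:ℕ) - 2) * 2^(n:ℕ) = 2^((d:ℤ)-3) * 2 := by
      rw [← zpow_natCast (2:ℚ) n, ← zpow_add₀ (by norm_num : (2:ℚ) ≠ 0),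
        show (d:ℤ) - n - ((0:ℕ):ℤ) - 2 + n = ((d:ℤ)-3) + 1 by push_cast; ring,
        zpow_add₀ (by norm_num : (2:ℚ) ≠ 0), zpow_one]
    calc ((-1 : ℚ) ^ (n - 1) / n) * (2 : ℚ) ^ ((d : ℤ) - n - (0:ℕ) - 2) * (d.choose n)
          * ((n:ℚ) * 2^n / 2)
        = ((-1:ℚ)^(n-1) * (d.choose n : ℚ)) * (((2:ℚ) ^ ((d : ℤ) - n - (0:ℕ) - 2) * 2^(n:ℕ)) * ((n:ℚ)/n) / 2) := by
          ring
      _ = ((-1:ℚ)^(n-1) * (d.choose n : ℚ)) * 2^((d:ℤ)-3) := by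
          rw [h2, div_self hn0]; ring
  rw [Finset.sum_congr rfl hterm, ← Finset.sum_mul, altsum d (by omega), one_mul]
end

section
/- Let nu : B -> X be the normalization of an integral projective curve X with a single node obtained by gluing distinct points p, q of B. For an invertible sheaf M of degree d on B with h^0(M) = r+1 and h^0(M(-p-q)) = r, there is a unique surjection h : nu_* M -> sk onto the skyscraper sheaf at the node which induces the zero map on global sections, and its kernel L satisfies h^0(X, L) = r + 1. -/
/-- Let `ν : B → X` be the normalization of the 1-nodal curve `X = B_{pq}` and
`M` an invertible sheaf of degree `d` on `B` with `h⁰(M) = r+1` and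
`h⁰(M(-p-q)) = r`.  Abstractly: `V = H⁰(B, M)` with `dim V = r+1`, `W` the
2-dimensional fiber of `ν_* M` at the node (`= M_p ⊕ M_q`), and `ev : V → W`
the evaluation map, whose kernel `H⁰(M(-p-q))` has dimension `r`.  Then there
is a surjection `h : W → ℂ` (i.e. a surjection `ν_* M ↠ sk` onto the skyscraper
at the node) inducing the zero map on global sections, its kernel `L` satisfies
`h⁰(X, L) = dim ker(h ∘ ev) = r + 1`, and `h` is unique up to a nonzero
scalar. -/
theorem statement_13 (r : ℕ) (V W : Type*)
    [AddCommGroup V] [Module ℂ V] [AddCommGroup W] [Module ℂ W]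
    [FiniteDimensional ℂ V] [FiniteDimensional ℂ W]
    (hV : Module.finrank ℂ V = r + 1) (hW : Module.finrank ℂ W = 2)
    (ev : V →ₗ[ℂ] W)
    (hker : Module.finrank ℂ (LinearMap.ker ev) = r) :
    ∃ h : W →ₗ[ℂ] ℂ, Function.Surjective h ∧ h.comp ev = 0 ∧
      Module.finrank ℂ (LinearMap.ker (h.comp ev)) = r + 1 ∧
      ∀ h' : W →ₗ[ℂ] ℂ, Function.Surjective h' → h'.comp ev = 0 →
        ∃ c : ℂ, c ≠ 0 ∧ h' = c • h := by
  -- range of ev has dimension 1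
  have hrange : Module.finrank ℂ (LinearMap.range ev) = 1 := by
    have := LinearMap.finrank_range_add_finrank_ker ev
    omega
  set R : Submodule ℂ W := LinearMap.range ev
  -- dual annihilator has dimension 1
  have hann : Module.finrank ℂ R.dualAnnihilator = 1 := by
    have e := (Subspace.quotEquivAnnihilator R).finrank_eq
    have := Submodule.finrank_quotient_add_finrank R
    omega
  obtain ⟨h, hhmem, hhne⟩ : ∃ h ∈ R.dualAnnihilator, h ≠ 0 := by
    by_contra hc
    push_neg at hc
    have : R.dualAnnihilator = ⊥ := by
      ext x; simp only [Submodule.mem_bot]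
      exact ⟨fun hx => hc x hx, fun hx => hx ▸ Submodule.zero_mem _⟩
    rw [this, finrank_bot] at hann
    omega
  have hcomp : h.comp ev = 0 := by
    ext x
    exact (Submodule.mem_dualAnnihilator h).mp hhmem (ev x) ⟨x, rfl⟩
  have hsurj : ∀ g : W →ₗ[ℂ] ℂ, g ≠ 0 → Function.Surjective g := by
    intro g hg c
    obtain ⟨w, hw⟩ : ∃ w, g w ≠ 0 := by
      by_contra hc; push_neg at hc
      exact hg (LinearMap.ext fun x => hc x)
    exact ⟨(c / g w) • w, by simp [div_mul_cancel₀, hw]⟩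
  refine ⟨h, hsurj h hhne, hcomp, ?_, ?_⟩
  · rw [hcomp, LinearMap.ker_zero, finrank_top, hV]
  · intro h' hs' hc'
    have hmem' : h' ∈ R.dualAnnihilator := by
      rw [Submodule.mem_dualAnnihilator]
      rintro w ⟨x, rfl⟩
      exact LinearMap.congr_fun hc' x
    -- span of h equals the annihilator
    have hspan : Submodule.span ℂ {h} = R.dualAnnihilator := by
      apply Submodule.eq_of_le_of_finrank_eq
      · rw [Submodule.span_le, Set.singleton_subset_iff]; exact hhmem
      · rw [hann, finrank_span_singleton hhne]
    have : h' ∈ Submodule.span ℂ {h} := hspan ▸ hmem'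
    obtain ⟨c, hc⟩ := Submodule.mem_span_singleton.mp this
    refine ⟨c, ?_, hc.symm⟩
    rintro rfl
    rw [zero_smul] at hc
    obtain ⟨w, hw⟩ := hs' 1
    rw [← hc] at hw
    simp at hw
end
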